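/- Let T be a Suslin tree and D ⊆ T a dense open subset (dense: every t ∈ T has some p ∈ D with t ≤_T p; open: p ∈ D and t ≥_T p implies t ∈ D). Then T \ D is countable. -/

import Mathlib

open Ordinal Set

noncomputable section

/-- Parity of an ordinal: `a = γ + n` with `γ` limit, `n < ω`; even iff `n` is even. -/
def OrdEven (a : Ordinal) : Prop := a % 2 = 0

/-- Upper semicontinuity. -/
def USC {X : Type} [TopologicalSpace X] (f : X → ℝ) : Prop :=
  ∀ r : ℝ, IsOpen (f ⁻¹' Set.Iio r)

/-- The least ordinal where two transfinite sequences differ. -/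
def dOrd (f g : Ordinal → ℝ) : Ordinal := sInf {a | f a ≠ g a}

/-- The alternating lexicographical order on transfinite sequences of reals. -/
def AltLex (f g : Ordinal → ℝ) : Prop :=
  f ≠ g ∧ ((OrdEven (dOrd f g) ∧ f (dOrd f g) < g (dOrd f g)) ∨
    (¬ OrdEven (dOrd f g) ∧ g (dOrd f g) < f (dOrd f g)))

/-- `f` encodes a strictly decreasing countable transfinite sequence in `[0,1]`
with last element `0` at index `ξ` (padded with `0` beyond `ξ`). -/
def IsDSeqLen (f : Ordinal → ℝ) (ξ : Ordinal) : Prop :=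
  ξ < (Cardinal.aleph 1).ord ∧ (∀ a, f a ∈ Set.Icc (0:ℝ) 1) ∧
  (∀ a b, a < b → b ≤ ξ → f b < f a) ∧ (∀ a, ξ ≤ a → f a = 0)

/-- Membership in `[0,1]^{<ω₁}_{↘0}`. -/
def IsDSeq (f : Ordinal → ℝ) : Prop := ∃ ξ, IsDSeqLen f ξ

theorem stmt_10 (T : Type) [PartialOrder T] [WellFoundedLT T]
    (htree : ∀ t : T, IsWellOrder {s : T // s < t} (fun a b => a.1 < b.1))
    (hcard : Cardinal.mk T = Cardinal.aleph 1)
    (hlev : ∀ o : Ordinal,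
      Set.Countable {t : T | IsWellFounded.rank (α := T) (· < ·) t = o})
    (hchain : ∀ C : Set T, IsChain (· ≤ ·) C → C.Countable)
    (hanti : ∀ A : Set T, IsAntichain (· ≤ ·) A → A.Countable)
    (D : Set T) (hdense : ∀ t : T, ∃ p ∈ D, t ≤ p)
    (hopen : ∀ p ∈ D, ∀ t : T, p ≤ t → t ∈ D) :
    Set.Countable Dᶜ := by
  classical
  -- the set of minimal elements of D
  set M : Set T := {m | m ∈ D ∧ ∀ q ∈ D, ¬ q < m} with hM
  have hMa : IsAntichain (· ≤ ·) M := by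
    rintro a ⟨haD, _⟩ b ⟨_, hb⟩ hne hle
    exact hb a haD (lt_of_le_of_ne hle hne)
  -- predecessors of any element are pairwise comparable
  have hcomp : ∀ m : T, ∀ a b : T, a < m → b < m → a ≤ b ∨ b ≤ a := by
    intro m a b ha hb
    rcases (haveI := htree m; trichotomous (r := fun a b : {s : T // s < m} => a.1 < b.1) ⟨a, ha⟩ ⟨b, hb⟩) with h | h | h
    · exact Or.inl h.le
    · exact Or.inl (le_of_eq (congrArg Subtype.val h))
    · exact Or.inr h.le
  -- every t ∉ D is strictly below some minimal element of D
  have key : ∀ t ∈ Dᶜ, ∃ m ∈ M, t < m := by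
    intro t ht
    obtain ⟨p, hpD, htp⟩ := hdense t
    obtain ⟨m, ⟨hmD, htm⟩, hmin⟩ :=
      (IsWellFounded.wf (α := T) (r := (· < ·))).has_min {q | q ∈ D ∧ t ≤ q}
        ⟨p, hpD, htp⟩
    have htm' : t < m := lt_of_le_of_ne htm (fun h => ht (h ▸ hmD))
    refine ⟨m, ⟨hmD, fun q hqD hqm => ?_⟩, htm'⟩
    rcases hcomp m q t hqm htm' with h | h
    · exact ht (hopen q hqD t h)
    · exact hmin q ⟨hqD, h⟩ hqm
  have hsub : Dᶜ ⊆ ⋃ m ∈ M, {s | s ≤ m} := by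
    intro t ht
    obtain ⟨m, hmM, htm⟩ := key t ht
    exact Set.mem_biUnion hmM htm.le
  refine Set.Countable.mono hsub (Set.Countable.biUnion (hanti M hMa) ?_)
  intro m _
  refine hchain _ ?_
  intro a ha b hb hne
  rcases eq_or_lt_of_le ha with rfl | ha'
  · exact Or.inr hb
  rcases eq_or_lt_of_le hb with rfl | hb'
  · exact Or.inl ha
  exact hcomp m a b ha' hb'
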